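/- Let u : A ⥤ B and v : B ⥤ C be functors between small categories, and consider A over C via the composite u ⋙ v. Then u is aspheric if and only if for every object c of C the induced functor u/c : A/c ⥤ B/c between comma categories (A/c formed with respect to u ⋙ v, B/c with respect to v, with u/c sending (a, p : v(u a) ⟶ c) to (u a, p)) is aspheric. -/

import Mathlib

open CategoryTheory Limits

namespace Paper

/-- A right asphericity structure: a class of small categories satisfying (As1): every
small category having a terminal object belongs to the class, and (As2): if `u : A ⥤ B`
is a functor with `B` in the class and all comma categories `A/b` in the class, then `A`
is in the class. -/
def IsRightAsphericityStructure (𝒜 : Set Cat.{0,0}) : Prop :=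
  (∀ C : Cat.{0,0}, HasTerminal C → C ∈ 𝒜) ∧
  (∀ (A B : Cat.{0,0}) (u : A ⥤ B), B ∈ 𝒜 →
    (∀ b : B, Cat.of (CostructuredArrow u b) ∈ 𝒜) → A ∈ 𝒜)

/-- A functor between small categories is aspheric (w.r.t. a class 𝒜 of small
categories) if all its comma categories `A/b` belong to 𝒜. -/
def Aspheric (𝒜 : Set Cat.{0,0}) {A B : Cat.{0,0}} (u : A ⥤ B) : Prop :=
  ∀ b : B, Cat.of (CostructuredArrow u b) ∈ 𝒜


/-- An asphericity structure is closed under equivalence of categories. -/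
lemma mem_of_equivalence (𝒜 : Set Cat.{0,0}) (h𝒜 : IsRightAsphericityStructure 𝒜)
    {X Y : Cat.{0,0}} (e : X ≌ Y) (hY : Y ∈ 𝒜) : X ∈ 𝒜 := by
  refine h𝒜.2 X Y e.functor hY (fun b => ?_)
  refine h𝒜.1 _ ?_
  have ht : IsTerminal ((CostructuredArrow.mapIso (e.counitIso.app b)).functor.obj
      (CostructuredArrow.mk (𝟙 (e.functor.obj (e.inverse.obj b))))) :=
    IsTerminal.isTerminalObj _ _ (CostructuredArrow.mkIdTerminal (S := e.functor))
  exact ht.hasTerminal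

/-- Over a triangle `v ∘ u : A ⥤ B ⥤ C`, the functor `u` is aspheric if and only if
all the induced functors `u/c : A/c ⥤ B/c` are aspheric. -/
theorem aspheric_iff_comma_aspheric (𝒜 : Set Cat.{0,0})
    (h𝒜 : IsRightAsphericityStructure 𝒜) {A B C : Cat.{0,0}} (u : A ⥤ B) (v : B ⥤ C) :
    Aspheric 𝒜 u ↔
      ∀ c : C, Aspheric 𝒜
        (A := Cat.of (CostructuredArrow (u ⋙ v) c)) (B := Cat.of (CostructuredArrow v c))
        (CostructuredArrow.pre u v c) := by
  constructor
  · intro hu c b'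
    exact mem_of_equivalence 𝒜 h𝒜 (Y := Cat.of (CostructuredArrow u b'.left)) (CostructuredArrow.preEquivalence u b') (hu b'.left)
  · intro h b
    exact mem_of_equivalence 𝒜 h𝒜
      (Y := Cat.of (CostructuredArrow (CostructuredArrow.pre u v (v.obj b)) (CostructuredArrow.mk (𝟙 (v.obj b)))))
      (CostructuredArrow.preEquivalence u (CostructuredArrow.mk (𝟙 (v.obj b)))).symm
      (h (v.obj b) (CostructuredArrow.mk (𝟙 (v.obj b))))

end Paper
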